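/- Fix N ≥ 1, b ∈ ℝ, nonzero reals p_i, q_i with p_i⁻¹ ≠ b, q_i⁻¹ ≠ b, constants a_{i,1}, a_{i,2}, ξ_{i0}, η_{i0} ∈ ℝ, and let τ_n be the associated Casoratian. Then for every n ∈ ℤ, on all of ℝ⁴: τ_n · ∂_{x₁}∂_{x₋₁}τ_n − ∂_{x₁}τ_n · ∂_{x₋₁}τ_n − τ_n² = −τ_{n−1}·τ_{n+1} (the bilinear two-dimensional Toda lattice equation (½D_{x₁}D_{x₋₁} − 1)τ_n·τ_n = −τ_{n−1}τ_{n+1}). -/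

import Mathlib

/-- Partial derivative in `x₁`. -/
noncomputable def pd1 (F : ℝ → ℝ → ℝ → ℝ → ℝ) : ℝ → ℝ → ℝ → ℝ → ℝ :=
  fun x1 x2 xm1 xm2 => deriv (fun t => F t x2 xm1 xm2) x1

/-- Partial derivative in `x₂`. -/
noncomputable def pd2 (F : ℝ → ℝ → ℝ → ℝ → ℝ) : ℝ → ℝ → ℝ → ℝ → ℝ :=
  fun x1 x2 xm1 xm2 => deriv (fun t => F x1 t xm1 xm2) x2

/-- Partial derivative in `x₋₁`. -/
noncomputable def pdm1 (F : ℝ → ℝ → ℝ → ℝ → ℝ) : ℝ → ℝ → ℝ → ℝ → ℝ :=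
  fun x1 x2 xm1 xm2 => deriv (fun t => F x1 x2 t xm2) xm1

/-- Partial derivative in `x₋₂`. -/
noncomputable def pdm2 (F : ℝ → ℝ → ℝ → ℝ → ℝ) : ℝ → ℝ → ℝ → ℝ → ℝ :=
  fun x1 x2 xm1 xm2 => deriv (fun t => F x1 x2 xm1 t) xm2

/-- The functions ψ_i^{(n)} of (x₁, x₂, x₋₁, x₋₂). -/
noncomputable def psi {N : ℕ} (b : ℝ) (p q a1 a2 ξ0 η0 : Fin N → ℝ)
    (i : Fin N) (n : ℤ) : ℝ → ℝ → ℝ → ℝ → ℝ :=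
  fun x1 x2 xm1 xm2 =>
    a1 i * ((p i)⁻¹ - b) ^ n *
      Real.exp (x1 / ((p i)⁻¹ - b) + x2 / ((p i)⁻¹ - b) ^ 2
        + (p i)⁻¹ * xm1 + ((p i)⁻¹) ^ 2 * xm2 + ξ0 i)
    + a2 i * ((q i)⁻¹ - b) ^ n *
      Real.exp (x1 / ((q i)⁻¹ - b) + x2 / ((q i)⁻¹ - b) ^ 2
        + (q i)⁻¹ * xm1 + ((q i)⁻¹) ^ 2 * xm2 + η0 i)

/-- The Casoratian τ_n = det[(ψ_i^{(n+j-1)})]. -/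
noncomputable def tau {N : ℕ} (b : ℝ) (p q a1 a2 ξ0 η0 : Fin N → ℝ)
    (n : ℤ) : ℝ → ℝ → ℝ → ℝ → ℝ :=
  fun x1 x2 xm1 xm2 =>
    Matrix.det (Matrix.of fun i j : Fin N =>
      psi b p q a1 a2 ξ0 η0 i (n + (j : ℕ)) x1 x2 xm1 xm2)

open Matrix Finset Module

lemma det_hasDerivAt {N : ℕ} (A : ℝ → Matrix (Fin N) (Fin N) ℝ)
    (A' : Matrix (Fin N) (Fin N) ℝ) (t : ℝ)
    (h : ∀ i j, HasDerivAt (fun s => A s i j) (A' i j) t) :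
    HasDerivAt (fun s => (A s).det)
      (∑ j, ((A t).updateCol j (fun i => A' i j)).det) t := by
  have hs : HasDerivAt
      (fun s => ∑ σ : Equiv.Perm (Fin N), (Equiv.Perm.sign σ : ℝ) * ∏ i, A s (σ i) i)
      (∑ σ : Equiv.Perm (Fin N), (Equiv.Perm.sign σ : ℝ) *
        ∑ j, (∏ i ∈ univ.erase j, A t (σ i) i) * A' (σ j) j) t := by
    apply HasDerivAt.fun_sum
    intro σ _
    have hprod := HasDerivAt.finset_prod (u := univ)
      (f := fun i s => A s (σ i) i) (f' := fun i => A' (σ i) i) (x := t)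
      (fun i _ => h (σ i) i)
    simpa [smul_eq_mul] using hprod.const_mul ((Equiv.Perm.sign σ : ℝ))
  have e1 : (fun s => (A s).det)
      = fun s => ∑ σ : Equiv.Perm (Fin N), (Equiv.Perm.sign σ : ℝ) * ∏ i, A s (σ i) i := by
    funext s; rw [Matrix.det_apply']
  rw [e1]
  have e2 : ∀ j : Fin N, ((A t).updateCol j (fun i => A' i j)).det
      = ∑ σ : Equiv.Perm (Fin N), (Equiv.Perm.sign σ : ℝ) *
          ((∏ i ∈ univ.erase j, A t (σ i) i) * A' (σ j) j) := by
    intro j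
    rw [Matrix.det_apply']
    apply Finset.sum_congr rfl
    intro σ _
    congr 1
    have hent : ∀ i, (A t).updateCol j (fun k => A' k j) (σ i) i
        = if i = j then A' (σ i) j else A t (σ i) i := by
      intro i; rw [Matrix.updateCol_apply]
    rw [Finset.prod_congr rfl (fun i _ => hent i),
      ← Finset.mul_prod_erase univ _ (mem_univ j), if_pos rfl,
      Finset.prod_congr rfl (fun i hi => if_neg (Finset.mem_erase.mp hi).1)]
    ring
  have e3 : (∑ j, ((A t).updateCol j (fun i => A' i j)).det)
      = ∑ σ : Equiv.Perm (Fin N), (Equiv.Perm.sign σ : ℝ) *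
        ∑ j, (∏ i ∈ univ.erase j, A t (σ i) i) * A' (σ j) j := by
    rw [Finset.sum_congr rfl (fun j _ => e2 j), Finset.sum_comm]
    exact Finset.sum_congr rfl fun σ _ => (Finset.mul_sum _ _ _).symm
  rw [e3]
  exact hs


section

variable {N : ℕ} (b : ℝ) (p q a1 a2 ξ0 η0 : Fin N → ℝ)

lemma psi_hasDerivAt_x1 (hpb : ∀ i, (p i)⁻¹ ≠ b) (hqb : ∀ i, (q i)⁻¹ ≠ b)
    (i : Fin N) (n : ℤ) (x1 x2 xm1 xm2 : ℝ) :
    HasDerivAt (fun t => psi b p q a1 a2 ξ0 η0 i n t x2 xm1 xm2)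
      (psi b p q a1 a2 ξ0 η0 i (n - 1) x1 x2 xm1 xm2) x1 := by
  have hP : (p i)⁻¹ - b ≠ 0 := sub_ne_zero.mpr (hpb i)
  have hQ : (q i)⁻¹ - b ≠ 0 := sub_ne_zero.mpr (hqb i)
  have h1 : HasDerivAt (fun t : ℝ => t / ((p i)⁻¹ - b) + x2 / ((p i)⁻¹ - b) ^ 2
      + (p i)⁻¹ * xm1 + ((p i)⁻¹) ^ 2 * xm2 + ξ0 i) (1 / ((p i)⁻¹ - b)) x1 := by
    exact ((((hasDerivAt_id x1).div_const ((p i)⁻¹ - b)).add_const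
      (x2 / ((p i)⁻¹ - b) ^ 2)).add_const ((p i)⁻¹ * xm1)).add_const
      (((p i)⁻¹) ^ 2 * xm2) |>.add_const (ξ0 i)
  have h2 : HasDerivAt (fun t : ℝ => t / ((q i)⁻¹ - b) + x2 / ((q i)⁻¹ - b) ^ 2
      + (q i)⁻¹ * xm1 + ((q i)⁻¹) ^ 2 * xm2 + η0 i) (1 / ((q i)⁻¹ - b)) x1 := by
    exact ((((hasDerivAt_id x1).div_const ((q i)⁻¹ - b)).add_const
      (x2 / ((q i)⁻¹ - b) ^ 2)).add_const ((q i)⁻¹ * xm1)).add_const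
      (((q i)⁻¹) ^ 2 * xm2) |>.add_const (η0 i)
  have := ((h1.exp.const_mul (a1 i * ((p i)⁻¹ - b) ^ n)).fun_add
    (h2.exp.const_mul (a2 i * ((q i)⁻¹ - b) ^ n)))
  convert this using 1
  · rfl
  · rfl
  · rfl
  simp only [psi]
  rw [zpow_sub_one₀ hP, zpow_sub_one₀ hQ]
  field_simp

lemma psi_hasDerivAt_xm1 (hpb : ∀ i, (p i)⁻¹ ≠ b) (hqb : ∀ i, (q i)⁻¹ ≠ b)
    (i : Fin N) (n : ℤ) (x1 x2 xm1 xm2 : ℝ) :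
    HasDerivAt (fun t => psi b p q a1 a2 ξ0 η0 i n x1 x2 t xm2)
      (psi b p q a1 a2 ξ0 η0 i (n + 1) x1 x2 xm1 xm2
        + b * psi b p q a1 a2 ξ0 η0 i n x1 x2 xm1 xm2) xm1 := by
  have hP : (p i)⁻¹ - b ≠ 0 := sub_ne_zero.mpr (hpb i)
  have hQ : (q i)⁻¹ - b ≠ 0 := sub_ne_zero.mpr (hqb i)
  have h1 : HasDerivAt (fun t : ℝ => x1 / ((p i)⁻¹ - b) + x2 / ((p i)⁻¹ - b) ^ 2
      + (p i)⁻¹ * t + ((p i)⁻¹) ^ 2 * xm2 + ξ0 i) ((p i)⁻¹) xm1 := by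
    simpa only [mul_one, id_eq] using ((((hasDerivAt_id xm1).const_mul ((p i)⁻¹)).const_add
      (x1 / ((p i)⁻¹ - b) + x2 / ((p i)⁻¹ - b) ^ 2)).add_const
      (((p i)⁻¹) ^ 2 * xm2)).add_const (ξ0 i)
  have h2 : HasDerivAt (fun t : ℝ => x1 / ((q i)⁻¹ - b) + x2 / ((q i)⁻¹ - b) ^ 2
      + (q i)⁻¹ * t + ((q i)⁻¹) ^ 2 * xm2 + η0 i) ((q i)⁻¹) xm1 := by
    simpa only [mul_one, id_eq] using ((((hasDerivAt_id xm1).const_mul ((q i)⁻¹)).const_add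
      (x1 / ((q i)⁻¹ - b) + x2 / ((q i)⁻¹ - b) ^ 2)).add_const
      (((q i)⁻¹) ^ 2 * xm2)).add_const (η0 i)
  have := ((h1.exp.const_mul (a1 i * ((p i)⁻¹ - b) ^ n)).fun_add
    (h2.exp.const_mul (a2 i * ((q i)⁻¹ - b) ^ n)))
  convert this using 1
  · rfl
  · rfl
  · rfl
  simp only [psi]
  rw [zpow_add_one₀ hP, zpow_add_one₀ hQ]
  have e1 : (p i)⁻¹ - b + b = (p i)⁻¹ := by ring
  have e2 : (q i)⁻¹ - b + b = (q i)⁻¹ := by ring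
  linear_combination (a1 i * ((p i)⁻¹ - b) ^ n * Real.exp (x1 / ((p i)⁻¹ - b)
      + x2 / ((p i)⁻¹ - b) ^ 2 + (p i)⁻¹ * xm1 + ((p i)⁻¹) ^ 2 * xm2 + ξ0 i)) * e1
    + (a2 i * ((q i)⁻¹ - b) ^ n * Real.exp (x1 / ((q i)⁻¹ - b)
      + x2 / ((q i)⁻¹ - b) ^ 2 + (q i)⁻¹ * xm1 + ((q i)⁻¹) ^ 2 * xm2 + η0 i)) * e2

end


noncomputable def tauM {N : ℕ} (b : ℝ) (p q a1 a2 ξ0 η0 : Fin N → ℝ)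
    (f : Fin N → ℤ) : ℝ → ℝ → ℝ → ℝ → ℝ :=
  fun x1 x2 xm1 xm2 =>
    (Matrix.of fun i j => psi b p q a1 a2 ξ0 η0 i (f j) x1 x2 xm1 xm2).det


section

variable {N : ℕ} (b : ℝ) (p q a1 a2 ξ0 η0 : Fin N → ℝ)

lemma tauM_eq_zero (f : Fin N → ℤ) {j k : Fin N} (hjk : j ≠ k) (hf : f j = f k)
    (x1 x2 xm1 xm2 : ℝ) : tauM b p q a1 a2 ξ0 η0 f x1 x2 xm1 xm2 = 0 :=
  Matrix.det_zero_of_column_eq hjk (fun i => by simp [hf])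

lemma tauM_hasDerivAt_x1 (hpb : ∀ i, (p i)⁻¹ ≠ b) (hqb : ∀ i, (q i)⁻¹ ≠ b)
    (f : Fin N → ℤ) (x1 x2 xm1 xm2 : ℝ) :
    HasDerivAt (fun t => tauM b p q a1 a2 ξ0 η0 f t x2 xm1 xm2)
      (∑ j, tauM b p q a1 a2 ξ0 η0 (Function.update f j (f j - 1)) x1 x2 xm1 xm2) x1 := by
  have h := det_hasDerivAt
    (fun s => Matrix.of fun i j => psi b p q a1 a2 ξ0 η0 i (f j) s x2 xm1 xm2)
    (Matrix.of fun i j => psi b p q a1 a2 ξ0 η0 i (f j - 1) x1 x2 xm1 xm2) x1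
    (fun i j => psi_hasDerivAt_x1 b p q a1 a2 ξ0 η0 hpb hqb i (f j) x1 x2 xm1 xm2)
  convert h using 1
  · rfl
  refine Finset.sum_congr rfl fun j _ => ?_
  unfold tauM
  congr 1
  ext i j'
  simp only [Matrix.updateCol_apply, Matrix.of_apply, Function.update_apply]
  split_ifs with hj
  · subst hj; rfl
  · rfl

lemma tauM_hasDerivAt_xm1 (hpb : ∀ i, (p i)⁻¹ ≠ b) (hqb : ∀ i, (q i)⁻¹ ≠ b)
    (f : Fin N → ℤ) (x1 x2 xm1 xm2 : ℝ) :
    HasDerivAt (fun t => tauM b p q a1 a2 ξ0 η0 f x1 x2 t xm2)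
      ((∑ j, tauM b p q a1 a2 ξ0 η0 (Function.update f j (f j + 1)) x1 x2 xm1 xm2)
        + (N : ℝ) * b * tauM b p q a1 a2 ξ0 η0 f x1 x2 xm1 xm2) xm1 := by
  have h := det_hasDerivAt
    (fun s => Matrix.of fun i j => psi b p q a1 a2 ξ0 η0 i (f j) x1 x2 s xm2)
    (Matrix.of fun i j => psi b p q a1 a2 ξ0 η0 i (f j + 1) x1 x2 xm1 xm2
      + b * psi b p q a1 a2 ξ0 η0 i (f j) x1 x2 xm1 xm2) xm1
    (fun i j => psi_hasDerivAt_xm1 b p q a1 a2 ξ0 η0 hpb hqb i (f j) x1 x2 xm1 xm2)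
  have e : ∀ j : Fin N,
      (((Matrix.of fun i j' => psi b p q a1 a2 ξ0 η0 i (f j') x1 x2 xm1 xm2).updateCol j
          (fun i => (Matrix.of fun i j' => psi b p q a1 a2 ξ0 η0 i (f j' + 1) x1 x2 xm1 xm2
            + b * psi b p q a1 a2 ξ0 η0 i (f j') x1 x2 xm1 xm2) i j))).det
      = tauM b p q a1 a2 ξ0 η0 (Function.update f j (f j + 1)) x1 x2 xm1 xm2
        + b * tauM b p q a1 a2 ξ0 η0 f x1 x2 xm1 xm2 := by
    intro j
    have hcol : (fun i => (Matrix.of fun i j' => psi b p q a1 a2 ξ0 η0 i (f j' + 1) x1 x2 xm1 xm2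
            + b * psi b p q a1 a2 ξ0 η0 i (f j') x1 x2 xm1 xm2) i j)
        = (fun i => psi b p q a1 a2 ξ0 η0 i (f j + 1) x1 x2 xm1 xm2)
          + b • (fun i => psi b p q a1 a2 ξ0 η0 i (f j) x1 x2 xm1 xm2) := by
      funext i; simp [smul_eq_mul]
    rw [hcol, Matrix.det_updateCol_add, Matrix.det_updateCol_smul]
    congr 1
    · unfold tauM
      congr 1
      ext i j'
      simp only [Matrix.updateCol_apply, Matrix.of_apply, Function.update_apply]
      split_ifs with hj
      · subst hj; rfl
      · rfl
    · congr 1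
      have hc2 : (fun i => psi b p q a1 a2 ξ0 η0 i (f j) x1 x2 xm1 xm2)
          = fun i => (Matrix.of fun i j' => psi b p q a1 a2 ξ0 η0 i (f j') x1 x2 xm1 xm2) i j := rfl
      rw [hc2, Matrix.updateCol_eq_self]
      rfl
  convert h using 1
  · rfl
  rw [show (∑ j, (((Matrix.of fun i j' => psi b p q a1 a2 ξ0 η0 i (f j') x1 x2 xm1 xm2).updateCol j
          (fun i => (Matrix.of fun i j' => psi b p q a1 a2 ξ0 η0 i (f j' + 1) x1 x2 xm1 xm2
            + b * psi b p q a1 a2 ξ0 η0 i (f j') x1 x2 xm1 xm2) i j))).det)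
      = ∑ j, (tauM b p q a1 a2 ξ0 η0 (Function.update f j (f j + 1)) x1 x2 xm1 xm2
        + b * tauM b p q a1 a2 ξ0 η0 f x1 x2 xm1 xm2)
    from Finset.sum_congr rfl fun j _ => e j, Finset.sum_add_distrib, Finset.sum_const,
    Finset.card_univ, Fintype.card_fin, nsmul_eq_mul]
  push_cast
  ring
end


variable {m : ℕ}

noncomputable def omg (u : Matrix (Fin (m+2)) (Fin (m+2)) ℝ) (x y : Fin (m+2) → ℝ) : ℝ :=
  ((u.updateCol (Fin.last (m+1)) y).updateCol 0 x).det

lemma zero_ne_last : (0 : Fin (m+2)) ≠ Fin.last (m+1) := by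
  simp [Fin.ext_iff]

lemma upd_comm (u : Matrix (Fin (m+2)) (Fin (m+2)) ℝ) (x y : Fin (m+2) → ℝ) :
    (u.updateCol (Fin.last (m+1)) y).updateCol 0 x
      = (u.updateCol 0 x).updateCol (Fin.last (m+1)) y := by
  ext i j
  simp only [Matrix.updateCol_apply]
  split_ifs with h1 h2
  · exact absurd (h1.symm.trans h2) zero_ne_last
  · rfl
  · rfl
  · rfl

lemma omg_add_left (u : Matrix (Fin (m+2)) (Fin (m+2)) ℝ) (x x' y : Fin (m+2) → ℝ) :
    omg u (x + x') y = omg u x y + omg u x' y :=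
  Matrix.det_updateCol_add _ _ _ _

lemma omg_smul_left (u : Matrix (Fin (m+2)) (Fin (m+2)) ℝ) (r : ℝ) (x y : Fin (m+2) → ℝ) :
    omg u (r • x) y = r * omg u x y :=
  Matrix.det_updateCol_smul _ _ _ _

lemma omg_add_right (u : Matrix (Fin (m+2)) (Fin (m+2)) ℝ) (x y y' : Fin (m+2) → ℝ) :
    omg u x (y + y') = omg u x y + omg u x y' := by
  unfold omg
  rw [upd_comm, upd_comm u x y, upd_comm u x y']
  exact Matrix.det_updateCol_add _ _ _ _

lemma omg_smul_right (u : Matrix (Fin (m+2)) (Fin (m+2)) ℝ) (r : ℝ) (x y : Fin (m+2) → ℝ) :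
    omg u x (r • y) = r * omg u x y := by
  unfold omg
  rw [upd_comm, upd_comm u x y]
  exact Matrix.det_updateCol_smul _ _ _ _

lemma omg_antisymm (u : Matrix (Fin (m+2)) (Fin (m+2)) ℝ) (x y : Fin (m+2) → ℝ) :
    omg u y x = - omg u x y := by
  have hmat : (u.updateCol (Fin.last (m+1)) x).updateCol 0 y
      = ((u.updateCol (Fin.last (m+1)) y).updateCol 0 x).submatrix id
          (Equiv.swap 0 (Fin.last (m+1))) := by
    ext i j
    simp only [Matrix.submatrix_apply, id_eq, Matrix.updateCol_apply]
    rcases eq_or_ne j 0 with h0 | h0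
    · subst h0
      rw [Equiv.swap_apply_left]
      simp [zero_ne_last, (zero_ne_last (m := m)).symm]
    · rcases eq_or_ne j (Fin.last (m+1)) with hl | hl
      · subst hl
        rw [Equiv.swap_apply_right]
        simp [zero_ne_last, (zero_ne_last (m := m)).symm]
      · rw [Equiv.swap_apply_of_ne_of_ne h0 hl]
        simp [h0, hl]
  unfold omg
  rw [hmat, Matrix.det_permute', Equiv.Perm.sign_swap zero_ne_last]
  simp

lemma omg_mid_left (u : Matrix (Fin (m+2)) (Fin (m+2)) ℝ) (y : Fin (m+2) → ℝ) (k : Fin m) :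
    omg u (fun i => u i ⟨(k : ℕ) + 1, by omega⟩) y = 0 := by
  have hne : (0 : Fin (m+2)) ≠ (⟨(k : ℕ) + 1, by omega⟩ : Fin (m+2)) := by
    simp [Fin.ext_iff]
  refine Matrix.det_zero_of_column_eq hne fun i => ?_
  have h1 : ((⟨(k : ℕ) + 1, by omega⟩ : Fin (m+2))) ≠ Fin.last (m+1) := by
    simp [Fin.ext_iff]; omega
  simp [Matrix.updateCol_apply, (zero_ne_last (m := m)).symm, h1,
    (hne.symm : _), Ne.symm h1]

lemma omg_mid_right (u : Matrix (Fin (m+2)) (Fin (m+2)) ℝ) (x : Fin (m+2) → ℝ) (k : Fin m) :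
    omg u x (fun i => u i ⟨(k : ℕ) + 1, by omega⟩) = 0 := by
  rw [omg_antisymm u (fun i => u i ⟨(k : ℕ) + 1, by omega⟩) x, omg_mid_left, neg_zero]

lemma pluecker (u : Matrix (Fin (m+2)) (Fin (m+2)) ℝ) (a b c d : Fin (m+2) → ℝ) :
    omg u a b * omg u c d - omg u a c * omg u b d + omg u a d * omg u b c = 0 := by
  classical
  set cfam : Fin m → (Fin (m+2) → ℝ) := fun k i => u i ⟨(k : ℕ) + 1, by omega⟩ with hcfam
  by_cases hc : LinearIndependent ℝ cfam
  · -- independent case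
    set W := Submodule.span ℝ (Set.range cfam) with hW
    have hmemleft : ∀ w ∈ W, ∀ y, omg u w y = 0 := by
      intro w hw y
      let L : (Fin (m+2) → ℝ) →ₗ[ℝ] ℝ :=
        { toFun := fun x => omg u x y
          map_add' := fun x x' => omg_add_left u x x' y
          map_smul' := fun r x => omg_smul_left u r x y }
      have hle : W ≤ LinearMap.ker L := by
        rw [hW, Submodule.span_le]
        rintro _ ⟨k, rfl⟩
        exact omg_mid_left u y k
      exact hle hw
    have hmemright : ∀ x, ∀ w ∈ W, omg u x w = 0 := by
      intro x w hw
      let L : (Fin (m+2) → ℝ) →ₗ[ℝ] ℝ :=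
        { toFun := fun y => omg u x y
          map_add' := fun y y' => omg_add_right u x y y'
          map_smul' := fun r y => omg_smul_right u r x y }
      have hle : W ≤ LinearMap.ker L := by
        rw [hW, Submodule.span_le]
        rintro _ ⟨k, rfl⟩
        exact omg_mid_right u x k
      exact hle hw
    have hdiff : ∀ x x' y y' : Fin (m+2) → ℝ, (x - x') ∈ W → (y - y') ∈ W →
        omg u x y = omg u x' y' := by
      intro x x' y y' hx hy
      have e1 : omg u x y = omg u x' y := by
        have : x = (x - x') + x' := by ring_nf
        rw [this, omg_add_left, hmemleft _ hx, zero_add]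
      have e2 : omg u x' y = omg u x' y' := by
        have : y = (y - y') + y' := by ring_nf
        rw [this, omg_add_right, hmemright _ _ hy, zero_add]
      rw [e1, e2]
    have hfrW : finrank ℝ W = m := by
      rw [hW, finrank_span_eq_card hc]
      simp
    have hfrQ : finrank ℝ ((Fin (m+2) → ℝ) ⧸ W) = 2 := by
      have h1 := Submodule.finrank_quotient_add_finrank W
      have h2 : finrank ℝ (Fin (m+2) → ℝ) = m + 2 := by
        simp [Module.finrank_pi]
      omega
    let bb : Basis (Fin 2) ℝ ((Fin (m+2) → ℝ) ⧸ W) := finBasisOfFinrankEq ℝ _ hfrQ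
    obtain ⟨e, he⟩ := Submodule.mkQ_surjective W (bb 0)
    obtain ⟨f, hf⟩ := Submodule.mkQ_surjective W (bb 1)
    have hrepr : ∀ x : Fin (m+2) → ℝ, ∃ α β : ℝ, (x - (α • e + β • f)) ∈ W := by
      intro x
      refine ⟨bb.repr (W.mkQ x) 0, bb.repr (W.mkQ x) 1, ?_⟩
      rw [← Submodule.Quotient.mk_eq_zero W, ← Submodule.mkQ_apply, map_sub, map_add,
        LinearMap.map_smul, LinearMap.map_smul, he, hf, sub_eq_zero]
      conv_lhs => rw [← bb.sum_repr (W.mkQ x)]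
      rw [Fin.sum_univ_two]
    have hee : omg u e e = 0 := by
      have := omg_antisymm u e e; linarith
    have hff : omg u f f = 0 := by
      have := omg_antisymm u f f; linarith
    have key : ∀ (x y : Fin (m+2) → ℝ) (α β γ δ : ℝ),
        (x - (α • e + β • f)) ∈ W → (y - (γ • e + δ • f)) ∈ W →
        omg u x y = (α * δ - β * γ) * omg u e f := by
      intro x y α β γ δ hx hy
      rw [hdiff x (α • e + β • f) y (γ • e + δ • f) hx hy]
      simp only [omg_add_left, omg_add_right, omg_smul_left, omg_smul_right, hee, hff,
        omg_antisymm u e f]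
      ring
    obtain ⟨αa, βa, ha⟩ := hrepr a
    obtain ⟨αb, βb, hb⟩ := hrepr b
    obtain ⟨αc, βc, hcc⟩ := hrepr c
    obtain ⟨αd, βd, hd⟩ := hrepr d
    rw [key a b αa βa αb βb ha hb, key c d αc βc αd βd hcc hd,
      key a c αa βa αc βc ha hcc, key b d αb βb αd βd hb hd,
      key a d αa βa αd βd ha hd, key b c αb βb αc βc hb hcc]
    ring
  · -- dependent case
    suffices hz : ∀ x y, omg u x y = 0 by
      rw [hz, hz, hz, hz, hz, hz]; ring
    intro x y
    obtain ⟨g, hsum, k0, hk0⟩ := Fintype.not_linearIndependent_iff.mp hc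
    set G : Fin (m+2) → ℝ := Fin.cons 0 (Fin.snoc g 0) with hG
    have hGmid : ∀ k : Fin m, G (Fin.succ (Fin.castSucc k)) = g k := by
      intro k
      rw [hG, Fin.cons_succ, Fin.snoc_castSucc]
    have hGne : G ≠ 0 := by
      intro h0
      apply hk0
      rw [← hGmid k0, h0]
      rfl
    have hMG : ((u.updateCol (Fin.last (m+1)) y).updateCol 0 x) *ᵥ G = 0 := by
      funext i
      rw [Matrix.mulVec, dotProduct]
      rw [Fin.sum_univ_succ, Fin.sum_univ_castSucc]
      have hG0 : G 0 = 0 := by rw [hG, Fin.cons_zero]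
      have hGlast : G (Fin.succ (Fin.last m)) = 0 := by
        rw [hG, Fin.cons_succ, Fin.snoc_last]
      rw [hG0, hGlast, mul_zero, mul_zero, add_zero, zero_add]
      have hterm : ∀ k : Fin m,
          ((u.updateCol (Fin.last (m+1)) y).updateCol 0 x) i (Fin.succ (Fin.castSucc k))
            * G (Fin.succ (Fin.castSucc k)) = g k * cfam k i := by
        intro k
        have hj0 : (Fin.succ (Fin.castSucc k)) ≠ (0 : Fin (m+2)) := by
          simp [Fin.ext_iff]
        have hjl : (Fin.succ (Fin.castSucc k)) ≠ Fin.last (m+1) := by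
          simp [Fin.ext_iff]; omega
        rw [Matrix.updateCol_ne hj0, Matrix.updateCol_ne hjl, hGmid k, hcfam]
        have hidx : (Fin.succ (Fin.castSucc k)) = (⟨(k : ℕ) + 1, by omega⟩ : Fin (m+2)) := by
          ext; simp
        rw [hidx]
        ring
      rw [Finset.sum_congr rfl fun k _ => hterm k]
      have hs := congrFun hsum i
      simpa [Finset.sum_apply] using hs
    exact (Matrix.exists_mulVec_eq_zero_iff (A := ℝ)).mp ⟨G, hGne, hMG⟩


theorem case1 (b : ℝ) (p q a1 a2 ξ0 η0 : Fin 1 → ℝ)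
    (hpb : ∀ i, (p i)⁻¹ ≠ b) (hqb : ∀ i, (q i)⁻¹ ≠ b) (n : ℤ) (x1 x2 xm1 xm2 : ℝ) :
      tau b p q a1 a2 ξ0 η0 n x1 x2 xm1 xm2
          * pd1 (pdm1 (tau b p q a1 a2 ξ0 η0 n)) x1 x2 xm1 xm2
        - pd1 (tau b p q a1 a2 ξ0 η0 n) x1 x2 xm1 xm2
          * pdm1 (tau b p q a1 a2 ξ0 η0 n) x1 x2 xm1 xm2
        - (tau b p q a1 a2 ξ0 η0 n x1 x2 xm1 xm2) ^ 2
      = -(tau b p q a1 a2 ξ0 η0 (n - 1) x1 x2 xm1 xm2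
          * tau b p q a1 a2 ξ0 η0 (n + 1) x1 x2 xm1 xm2) := by
  have htau : ∀ (k : ℤ) (X1 X2 XM1 XM2 : ℝ), tau b p q a1 a2 ξ0 η0 k X1 X2 XM1 XM2
      = psi b p q a1 a2 ξ0 η0 0 k X1 X2 XM1 XM2 := by
    intro k X1 X2 XM1 XM2
    unfold tau
    rw [Matrix.det_fin_one]
    simp
  have hpd1 : ∀ (k : ℤ) (X1 X2 XM1 XM2 : ℝ), pd1 (tau b p q a1 a2 ξ0 η0 k) X1 X2 XM1 XM2
      = psi b p q a1 a2 ξ0 η0 0 (k - 1) X1 X2 XM1 XM2 := by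
    intro k X1 X2 XM1 XM2
    unfold pd1
    rw [show (fun t => tau b p q a1 a2 ξ0 η0 k t X2 XM1 XM2)
      = fun t => psi b p q a1 a2 ξ0 η0 0 k t X2 XM1 XM2 from funext fun t => htau k t X2 XM1 XM2]
    exact (psi_hasDerivAt_x1 b p q a1 a2 ξ0 η0 hpb hqb 0 k X1 X2 XM1 XM2).deriv
  have hpdm1 : ∀ (X1 X2 XM1 XM2 : ℝ), pdm1 (tau b p q a1 a2 ξ0 η0 n) X1 X2 XM1 XM2
      = psi b p q a1 a2 ξ0 η0 0 (n + 1) X1 X2 XM1 XM2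
        + b * psi b p q a1 a2 ξ0 η0 0 n X1 X2 XM1 XM2 := by
    intro X1 X2 XM1 XM2
    unfold pdm1
    rw [show (fun t => tau b p q a1 a2 ξ0 η0 n X1 X2 t XM2)
      = fun t => psi b p q a1 a2 ξ0 η0 0 n X1 X2 t XM2 from funext fun t => htau n X1 X2 t XM2]
    exact (psi_hasDerivAt_xm1 b p q a1 a2 ξ0 η0 hpb hqb 0 n X1 X2 XM1 XM2).deriv
  have hpd2 : pd1 (pdm1 (tau b p q a1 a2 ξ0 η0 n)) x1 x2 xm1 xm2
      = psi b p q a1 a2 ξ0 η0 0 n x1 x2 xm1 xm2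
        + b * psi b p q a1 a2 ξ0 η0 0 (n - 1) x1 x2 xm1 xm2 := by
    unfold pd1
    rw [show (fun t => pdm1 (tau b p q a1 a2 ξ0 η0 n) t x2 xm1 xm2)
      = fun t => psi b p q a1 a2 ξ0 η0 0 (n+1) t x2 xm1 xm2
        + b * psi b p q a1 a2 ξ0 η0 0 n t x2 xm1 xm2 from funext fun t => hpdm1 t x2 xm1 xm2]
    have hd := (psi_hasDerivAt_x1 b p q a1 a2 ξ0 η0 hpb hqb 0 (n+1) x1 x2 xm1 xm2).fun_add
      (HasDerivAt.const_mul b (psi_hasDerivAt_x1 b p q a1 a2 ξ0 η0 hpb hqb 0 n x1 x2 xm1 xm2))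
    rw [hd.deriv]
    have : n + 1 - 1 = n := by ring
    rw [this]
  rw [hpd2, hpd1 n, hpdm1, htau n, htau (n-1), htau (n+1)]
  ring


section Case2

variable (m : ℕ) (b : ℝ) (p q a1 a2 ξ0 η0 : Fin (m+2) → ℝ) (n : ℤ)

theorem case2 (hpb : ∀ i, (p i)⁻¹ ≠ b) (hqb : ∀ i, (q i)⁻¹ ≠ b) (x1 x2 xm1 xm2 : ℝ) :
      tau b p q a1 a2 ξ0 η0 n x1 x2 xm1 xm2
          * pd1 (pdm1 (tau b p q a1 a2 ξ0 η0 n)) x1 x2 xm1 xm2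
        - pd1 (tau b p q a1 a2 ξ0 η0 n) x1 x2 xm1 xm2
          * pdm1 (tau b p q a1 a2 ξ0 η0 n) x1 x2 xm1 xm2
        - (tau b p q a1 a2 ξ0 η0 n x1 x2 xm1 xm2) ^ 2
      = -(tau b p q a1 a2 ξ0 η0 (n - 1) x1 x2 xm1 xm2
          * tau b p q a1 a2 ξ0 η0 (n + 1) x1 x2 xm1 xm2) := by
  classical
  have h0l : (0 : Fin (m+2)) ≠ Fin.last (m+1) := by simp [Fin.ext_iff]
  -- the shift functions
  set f0 : Fin (m+2) → ℤ := fun j => n + ((j : ℕ) : ℤ) with hf0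
  set f1 : Fin (m+2) → ℤ := Function.update f0 0 (n-1) with hf1
  set f2 : Fin (m+2) → ℤ := Function.update f0 (Fin.last (m+1)) (n + (m+1) + 1) with hf2
  set f3 : Fin (m+2) → ℤ := Function.update f2 0 (n-1) with hf3
  -- tau as tauM
  have htau : ∀ k : ℤ, tau b p q a1 a2 ξ0 η0 k = tauM b p q a1 a2 ξ0 η0 (fun j => k + ((j:ℕ):ℤ)) :=
    fun k => rfl
  -- collapsing the x1-derivative sum for f0
  have hsum1 : ∀ X1 X2 XM1 XM2 : ℝ,
      (∑ j, tauM b p q a1 a2 ξ0 η0 (Function.update f0 j (f0 j - 1)) X1 X2 XM1 XM2)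
        = tauM b p q a1 a2 ξ0 η0 f1 X1 X2 XM1 XM2 := by
    intro X1 X2 XM1 XM2
    rw [Finset.sum_eq_single_of_mem 0 (Finset.mem_univ 0)]
    · have e1 : Function.update f0 0 (f0 0 - 1) = f1 := by
        rw [hf1]; congr 1; simp [hf0]
      rw [e1]
    · intro j _ hj0
      have hjv : 1 ≤ (j : ℕ) := by
        rcases Nat.eq_zero_or_pos (j : ℕ) with h | h
        · exact absurd (Fin.ext h : j = 0) hj0
        · exact h
      refine tauM_eq_zero b p q a1 a2 ξ0 η0 _
        (j := (⟨(j : ℕ) - 1, by omega⟩ : Fin (m+2))) (k := j) ?_ ?_ X1 X2 XM1 XM2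
      · intro h
        have := congrArg Fin.val h
        simp at this
        omega
      · rw [Function.update_apply, Function.update_apply, if_neg, if_pos rfl]
        · simp [hf0]
          push_cast
          omega
        · intro h
          have := congrArg Fin.val h
          simp at this
          omega
  -- pd1 tau
  have hpd1 : ∀ X1 X2 XM1 XM2 : ℝ, pd1 (tau b p q a1 a2 ξ0 η0 n) X1 X2 XM1 XM2
      = tauM b p q a1 a2 ξ0 η0 f1 X1 X2 XM1 XM2 := by
    intro X1 X2 XM1 XM2
    rw [htau n]
    unfold pd1
    rw [(tauM_hasDerivAt_x1 b p q a1 a2 ξ0 η0 hpb hqb f0 X1 X2 XM1 XM2).deriv]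
    exact hsum1 X1 X2 XM1 XM2
  -- pdm1 tau
  have hpdm1 : ∀ X1 X2 XM1 XM2 : ℝ, pdm1 (tau b p q a1 a2 ξ0 η0 n) X1 X2 XM1 XM2
      = tauM b p q a1 a2 ξ0 η0 f2 X1 X2 XM1 XM2
        + ((m+2 : ℕ) : ℝ) * b * tauM b p q a1 a2 ξ0 η0 f0 X1 X2 XM1 XM2 := by
    intro X1 X2 XM1 XM2
    rw [htau n]
    unfold pdm1
    rw [(tauM_hasDerivAt_xm1 b p q a1 a2 ξ0 η0 hpb hqb f0 X1 X2 XM1 XM2).deriv]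
    congr 1
    rw [Finset.sum_eq_single_of_mem (Fin.last (m+1)) (Finset.mem_univ (Fin.last (m+1)))]
    · have e2 : Function.update f0 (Fin.last (m+1)) (f0 (Fin.last (m+1)) + 1) = f2 := by
        rw [hf2]; congr 1
        all_goals simp [hf0]
        all_goals try push_cast
        all_goals try ring
      rw [e2]
    · intro j _ hjl
      have hjv : (j : ℕ) < m + 1 := by
        rcases Nat.lt_or_ge (j : ℕ) (m+1) with h | h
        · exact h
        · exact absurd (Fin.ext (by omega : (j : ℕ) = m + 1) : j = (Fin.last (m+1))) hjl
      refine tauM_eq_zero b p q a1 a2 ξ0 η0 _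
        (j := (⟨(j : ℕ) + 1, by omega⟩ : Fin (m+2))) (k := j) ?_ ?_ X1 X2 XM1 XM2
      · intro h
        have := congrArg Fin.val h
        simp at this
      · rw [Function.update_apply, Function.update_apply, if_neg, if_pos rfl]
        · simp [hf0]
          push_cast
          omega
        · intro h
          have := congrArg Fin.val h
          simp at this
  -- collapsing the x1-derivative sum for f2
  have hsum2 : ∀ X1 X2 XM1 XM2 : ℝ,
      (∑ j, tauM b p q a1 a2 ξ0 η0 (Function.update f2 j (f2 j - 1)) X1 X2 XM1 XM2)
        = tauM b p q a1 a2 ξ0 η0 f3 X1 X2 XM1 XM2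
          + tauM b p q a1 a2 ξ0 η0 f0 X1 X2 XM1 XM2 := by
    intro X1 X2 XM1 XM2
    have hsub : ({0, (Fin.last (m+1))} : Finset (Fin (m+2))) ⊆ Finset.univ := Finset.subset_univ _
    rw [← Finset.sum_subset hsub]
    · rw [Finset.sum_pair h0l]
      have e3 : Function.update f2 0 (f2 0 - 1) = f3 := by
        rw [hf3]
        congr 1
        rw [hf2, Function.update_apply, if_neg h0l]
        simp [hf0]
      have hv : f2 (Fin.last (m+1)) - 1 = f0 (Fin.last (m+1)) := by
        rw [hf2, Function.update_apply, if_pos rfl]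
        simp [hf0]
        try push_cast
        try ring
      have e4 : Function.update f2 (Fin.last (m+1)) (f2 (Fin.last (m+1)) - 1) = f0 := by
        rw [hv]
        rw [hf2, Function.update_idem, Function.update_eq_self]
      rw [e3, e4]
    · intro j _ hj
      simp only [Finset.mem_insert, Finset.mem_singleton] at hj
      push_neg at hj
      obtain ⟨hj0, hjl⟩ := hj
      have hjv1 : 1 ≤ (j : ℕ) := by
        rcases Nat.eq_zero_or_pos (j : ℕ) with h | h
        · exact absurd (Fin.ext h : j = 0) hj0
        · exact h
      have hjv2 : (j : ℕ) < m + 1 := by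
        rcases Nat.lt_or_ge (j : ℕ) (m+1) with h | h
        · exact h
        · exact absurd (Fin.ext (by omega : (j : ℕ) = m + 1) : j = (Fin.last (m+1))) hjl
      refine tauM_eq_zero b p q a1 a2 ξ0 η0 _
        (j := (⟨(j : ℕ) - 1, by omega⟩ : Fin (m+2))) (k := j) ?_ ?_ X1 X2 XM1 XM2
      · intro h
        have := congrArg Fin.val h
        simp at this
        omega
      · rw [Function.update_apply, Function.update_apply, if_neg, if_pos rfl]
        · rw [hf2, Function.update_apply, Function.update_apply, if_neg, if_neg]
          · simp [hf0]; push_cast; omega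
          · intro h; rw [h] at hjl; exact hjl rfl
          · intro h
            have := congrArg Fin.val h
            simp at this
            omega
        · intro h
          have := congrArg Fin.val h
          simp at this
          omega
  -- second derivative
  have hpd1pdm1 : pd1 (pdm1 (tau b p q a1 a2 ξ0 η0 n)) x1 x2 xm1 xm2
      = tauM b p q a1 a2 ξ0 η0 f3 x1 x2 xm1 xm2 + tauM b p q a1 a2 ξ0 η0 f0 x1 x2 xm1 xm2
        + ((m+2 : ℕ) : ℝ) * b * tauM b p q a1 a2 ξ0 η0 f1 x1 x2 xm1 xm2 := by
    unfold pd1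
    have hfun : (fun t => pdm1 (tau b p q a1 a2 ξ0 η0 n) t x2 xm1 xm2)
        = fun t => tauM b p q a1 a2 ξ0 η0 f2 t x2 xm1 xm2
          + ((m+2 : ℕ) : ℝ) * b * tauM b p q a1 a2 ξ0 η0 f0 t x2 xm1 xm2 := by
      funext t; exact hpdm1 t x2 xm1 xm2
    rw [hfun]
    have hd := (tauM_hasDerivAt_x1 b p q a1 a2 ξ0 η0 hpb hqb f2 x1 x2 xm1 xm2).fun_add
      (HasDerivAt.const_mul (((m+2 : ℕ) : ℝ) * b)
        (tauM_hasDerivAt_x1 b p q a1 a2 ξ0 η0 hpb hqb f0 x1 x2 xm1 xm2))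
    rw [hd.deriv, hsum2 x1 x2 xm1 xm2, hsum1 x1 x2 xm1 xm2]
  -- omega conversions
  set u : Matrix (Fin (m+2)) (Fin (m+2)) ℝ :=
    Matrix.of fun i j => psi b p q a1 a2 ξ0 η0 i (n + ((j : ℕ) : ℤ)) x1 x2 xm1 xm2 with hu
  set v : ℤ → (Fin (m+2) → ℝ) := fun k i => psi b p q a1 a2 ξ0 η0 i k x1 x2 xm1 xm2 with hv
  have homg : ∀ (g : Fin (m+2) → ℤ) (z w : ℤ), g 0 = z → g (Fin.last (m+1)) = w →
      (∀ j : Fin (m+2), j ≠ 0 → j ≠ Fin.last (m+1) → g j = n + ((j : ℕ) : ℤ)) →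
      tauM b p q a1 a2 ξ0 η0 g x1 x2 xm1 xm2 = omg u (v z) (v w) := by
    intro g z w h0 hl hmid
    unfold tauM omg
    congr 1
    ext i j
    rw [Matrix.updateCol_apply, Matrix.updateCol_apply]
    show psi b p q a1 a2 ξ0 η0 i (g j) x1 x2 xm1 xm2 = _
    by_cases hj0 : j = 0
    · subst hj0; rw [if_pos rfl, ← h0]; try rfl
    · rw [if_neg hj0]
      by_cases hjl : j = Fin.last (m+1)
      · subst hjl; rw [if_pos rfl, ← hl]; try rfl
      · rw [if_neg hjl, hmid j hj0 hjl]; try rfl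
  have h00 : tauM b p q a1 a2 ξ0 η0 f0 x1 x2 xm1 xm2 = omg u (v n) (v (n + (m+1))) := by
    refine homg f0 _ _ (by simp [hf0]) ?_ (fun j _ _ => by simp [hf0])
    simp [hf0]; try push_cast; try ring
  have h11 : tauM b p q a1 a2 ξ0 η0 f1 x1 x2 xm1 xm2 = omg u (v (n-1)) (v (n + (m+1))) := by
    refine homg f1 _ _ ?_ ?_ ?_
    · rw [hf1, Function.update_apply, if_pos rfl]
    · rw [hf1, Function.update_apply, if_neg (Ne.symm h0l)]
      simp [hf0]; try push_cast; try ring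
    · intro j hj0 _
      rw [hf1, Function.update_apply, if_neg hj0]
  have h22 : tauM b p q a1 a2 ξ0 η0 f2 x1 x2 xm1 xm2 = omg u (v n) (v (n + (m+1) + 1)) := by
    refine homg f2 _ _ ?_ ?_ ?_
    · rw [hf2, Function.update_apply, if_neg h0l]
      simp [hf0]
    · rw [hf2, Function.update_apply, if_pos rfl]
      try push_cast; try ring
    · intro j _ hjl
      rw [hf2, Function.update_apply, if_neg hjl]
  have h33 : tauM b p q a1 a2 ξ0 η0 f3 x1 x2 xm1 xm2 = omg u (v (n-1)) (v (n + (m+1) + 1)) := by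
    refine homg f3 _ _ ?_ ?_ ?_
    · rw [hf3, Function.update_apply, if_pos rfl]
    · rw [hf3, Function.update_apply, if_neg (Ne.symm h0l), hf2,
        Function.update_apply, if_pos rfl]
      try push_cast; try ring
    · intro j hj0 hjl
      rw [hf3, Function.update_apply, if_neg hj0, hf2, Function.update_apply, if_neg hjl]
  -- permutations for tau (n-1) and tau (n+1)
  have hi0 : ((⟨m, by omega⟩ : Fin (m+2)) : ℕ) = m := rfl
  set i0 : Fin (m+2) := ⟨m, by omega⟩ with hi0def
  set σ2 : Equiv.Perm (Fin (m+2)) := Fin.cycleRange i0 with hσ2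
  set σ1 : Equiv.Perm (Fin (m+2)) := Fin.revPerm * σ2 * Fin.revPerm with hσ1
  have hilast : i0 < Fin.last (m+1) := by
    rw [Fin.lt_def]; simp [hi0def]
  have hmp : (Matrix.of (fun i j : Fin (m+2) =>
        psi b p q a1 a2 ξ0 η0 i ((n+1) + ((j : ℕ) : ℤ)) x1 x2 xm1 xm2))
      = ((u.updateCol (Fin.last (m+1)) (v (n + (m+1) + 1))).updateCol 0
          (v (n + (m+1)))).submatrix id σ2 := by
    ext i j
    rw [Matrix.submatrix_apply]
    rcases lt_trichotomy ((j : ℕ)) m with hj | hj | hj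
    · have hlt : j < i0 := by rw [Fin.lt_def]; simpa [hi0def]
      have hval : ((σ2 j : Fin (m+2)) : ℕ) = (j : ℕ) + 1 := by
        rw [hσ2]; exact Fin.coe_cycleRange_of_lt hlt
      have h1 : σ2 j ≠ 0 := by
        intro h; rw [h] at hval; simp at hval
      have h2 : σ2 j ≠ Fin.last (m+1) := by
        intro h; rw [h] at hval; simp at hval; omega
      rw [Matrix.updateCol_ne h1, Matrix.updateCol_ne h2]
      show psi b p q a1 a2 ξ0 η0 i ((n+1) + ((j : ℕ) : ℤ)) x1 x2 xm1 xm2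
        = psi b p q a1 a2 ξ0 η0 i (n + (((σ2 j : Fin (m+2)) : ℕ) : ℤ)) x1 x2 xm1 xm2
      rw [hval]; congr 1; push_cast; ring
    · have hji : j = i0 := Fin.ext (by simp [hi0def, hj])
      have hσ : σ2 j = 0 := by rw [hσ2, hji]; exact Fin.cycleRange_self i0
      rw [hσ, Matrix.updateCol_self]
      show psi b p q a1 a2 ξ0 η0 i ((n+1) + ((j : ℕ) : ℤ)) x1 x2 xm1 xm2 = v (n + (m+1)) i
      rw [hv]; congr 1; rw [hj]; push_cast; ring
    · have hji : j = Fin.last (m+1) := Fin.ext (by simp; omega)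
      have hσ : σ2 j = Fin.last (m+1) := by
        rw [hσ2, hji]; exact Fin.cycleRange_of_gt hilast
      rw [hσ, Matrix.updateCol_ne (Ne.symm h0l), Matrix.updateCol_self]
      show psi b p q a1 a2 ξ0 η0 i ((n+1) + ((j : ℕ) : ℤ)) x1 x2 xm1 xm2 = v (n + (m+1) + 1) i
      rw [hv]; congr 1; rw [hji]; simp; push_cast; ring
  have hmm : (Matrix.of (fun i j : Fin (m+2) =>
        psi b p q a1 a2 ξ0 η0 i ((n-1) + ((j : ℕ) : ℤ)) x1 x2 xm1 xm2))
      = ((u.updateCol (Fin.last (m+1)) (v n)).updateCol 0 (v (n-1))).submatrix id σ1 := by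
    ext i j
    rw [Matrix.submatrix_apply]
    have happ : σ1 j = Fin.rev (σ2 (Fin.rev j)) := by rw [hσ1]; rfl
    have hjrv : ((Fin.rev j : Fin (m+2)) : ℕ) = m + 1 - (j : ℕ) := by
      rw [Fin.val_rev]; omega
    have hjle : (j : ℕ) < m + 2 := j.isLt
    by_cases hj0 : (j : ℕ) = 0
    · have hrl : Fin.rev j = Fin.last (m+1) := Fin.ext (by rw [hjrv]; simp; omega)
      have hσ : σ1 j = 0 := by
        rw [happ, hrl, hσ2, Fin.cycleRange_of_gt hilast, Fin.rev_last]
      rw [hσ, Matrix.updateCol_self]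
      show psi b p q a1 a2 ξ0 η0 i ((n-1) + ((j : ℕ) : ℤ)) x1 x2 xm1 xm2 = v (n-1) i
      rw [hv]; congr 1; rw [hj0]; push_cast; ring
    · by_cases hj1 : (j : ℕ) = 1
      · have hrl : Fin.rev j = i0 := Fin.ext (by rw [hjrv, hi0def]; simp; omega)
        have hσ : σ1 j = Fin.last (m+1) := by
          rw [happ, hrl, hσ2, Fin.cycleRange_self]
          exact Fin.ext (by rw [Fin.val_rev]; simp)
        rw [hσ, Matrix.updateCol_ne (Ne.symm h0l), Matrix.updateCol_self]
        show psi b p q a1 a2 ξ0 η0 i ((n-1) + ((j : ℕ) : ℤ)) x1 x2 xm1 xm2 = v n i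
        rw [hv]; congr 1; rw [hj1]; push_cast; ring
      · -- 2 ≤ j
        have hge : 2 ≤ (j : ℕ) := by omega
        have hrlt : Fin.rev j < i0 := by
          rw [Fin.lt_def, hjrv, hi0def]; simp; omega
        have hval2 : ((σ2 (Fin.rev j) : Fin (m+2)) : ℕ) = m + 2 - (j : ℕ) := by
          rw [hσ2, Fin.coe_cycleRange_of_lt hrlt, hjrv]; omega
        have hval1 : ((σ1 j : Fin (m+2)) : ℕ) = (j : ℕ) - 1 := by
          rw [happ, Fin.val_rev, hval2]; omega
        have h1 : σ1 j ≠ 0 := by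
          intro h; rw [h] at hval1; simp at hval1; omega
        have h2 : σ1 j ≠ Fin.last (m+1) := by
          intro h; rw [h] at hval1; simp at hval1; omega
        rw [Matrix.updateCol_ne h1, Matrix.updateCol_ne h2]
        show psi b p q a1 a2 ξ0 η0 i ((n-1) + ((j : ℕ) : ℤ)) x1 x2 xm1 xm2
          = psi b p q a1 a2 ξ0 η0 i (n + (((σ1 j : Fin (m+2)) : ℕ) : ℤ)) x1 x2 xm1 xm2
        rw [hval1]; congr 1; push_cast; omega
  have hdp : tauM b p q a1 a2 ξ0 η0 (fun j => (n+1) + ((j : ℕ) : ℤ)) x1 x2 xm1 xm2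
      = ((Equiv.Perm.sign σ2 : ℤ) : ℝ) * omg u (v (n + (m+1))) (v (n + (m+1) + 1)) := by
    have h1 := congrArg Matrix.det hmp
    rw [Matrix.det_permute'] at h1
    exact h1
  have hdm : tauM b p q a1 a2 ξ0 η0 (fun j => (n-1) + ((j : ℕ) : ℤ)) x1 x2 xm1 xm2
      = ((Equiv.Perm.sign σ1 : ℤ) : ℝ) * omg u (v (n-1)) (v n) := by
    have h1 := congrArg Matrix.det hmm
    rw [Matrix.det_permute'] at h1
    exact h1
  have hsign : ((Equiv.Perm.sign σ1 : ℤ) : ℝ) * ((Equiv.Perm.sign σ2 : ℤ) : ℝ) = 1 := by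
    have h1 : Equiv.Perm.sign σ1 = Equiv.Perm.sign σ2 := by
      rw [hσ1, _root_.map_mul, _root_.map_mul, mul_comm (Equiv.Perm.sign (Fin.revPerm : Equiv.Perm (Fin (m+2))))
        (Equiv.Perm.sign σ2), mul_assoc, Int.units_mul_self, mul_one]
    rw [h1, ← Int.cast_mul, ← Units.val_mul, Int.units_mul_self]
    simp
  -- final assembly
  rw [hpd1pdm1, hpd1 x1 x2 xm1 xm2, hpdm1 x1 x2 xm1 xm2, htau (n-1), htau (n+1), htau n,
    ← hf0, h00, h11, h22, h33, hdm, hdp]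
  linear_combination pluecker u (v (n-1)) (v n) (v (n + (m+1))) (v (n + (m+1) + 1))
    + (omg u (v (n-1)) (v n) * omg u (v (n + (m+1))) (v (n + (m+1) + 1))) * hsign


/-- the Casoratian τ_n satisfies the bilinear 2D Toda equation
(½D_{x₁}D_{x₋₁} − 1)τ_n·τ_n = −τ_{n−1}τ_{n+1}. -/
theorem tau_bilinear_Toda {N : ℕ} (hN : 1 ≤ N) (b : ℝ)
    (p q a1 a2 ξ0 η0 : Fin N → ℝ)
    (hp : ∀ i, p i ≠ 0) (hq : ∀ i, q i ≠ 0)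
    (hpb : ∀ i, (p i)⁻¹ ≠ b) (hqb : ∀ i, (q i)⁻¹ ≠ b) :
    ∀ (n : ℤ) (x1 x2 xm1 xm2 : ℝ),
      tau b p q a1 a2 ξ0 η0 n x1 x2 xm1 xm2
          * pd1 (pdm1 (tau b p q a1 a2 ξ0 η0 n)) x1 x2 xm1 xm2
        - pd1 (tau b p q a1 a2 ξ0 η0 n) x1 x2 xm1 xm2
          * pdm1 (tau b p q a1 a2 ξ0 η0 n) x1 x2 xm1 xm2
        - (tau b p q a1 a2 ξ0 η0 n x1 x2 xm1 xm2) ^ 2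
      = -(tau b p q a1 a2 ξ0 η0 (n - 1) x1 x2 xm1 xm2
          * tau b p q a1 a2 ξ0 η0 (n + 1) x1 x2 xm1 xm2) := by
  intro n x1 x2 xm1 xm2
  match N, hN, p, q, a1, a2, ξ0, η0, hp, hq, hpb, hqb with
  | 0, hN, p, q, a1, a2, ξ0, η0, hp, hq, hpb, hqb => exact absurd hN (by omega)
  | 1, _, p, q, a1, a2, ξ0, η0, hp, hq, hpb, hqb =>
    exact case1 b p q a1 a2 ξ0 η0 hpb hqb n x1 x2 xm1 xm2
  | (m+2), _, p, q, a1, a2, ξ0, η0, hp, hq, hpb, hqb =>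
    exact case2 m b p q a1 a2 ξ0 η0 n hpb hqb x1 x2 xm1 xm2
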